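/- The set of numerical semigroups T with T/2 = ℕ is exactly {⟨2, 2n+1⟩ : n ∈ ℕ}, i.e., the numerical semigroups generated by 2 and an odd positive number. -/
import Mathlib


/-- A numerical semigroup: a submonoid of (ℕ,+) with finite complement. -/
def IsNumericalSemigroup (S : Set ℕ) : Prop :=
  0 ∈ S ∧ (∀ a ∈ S, ∀ b ∈ S, a + b ∈ S) ∧ Sᶜ.Finite

/-- The quotient S/d = {x ∈ ℕ : d*x ∈ S}. -/
def NumQuot (S : Set ℕ) (d : ℕ) : Set ℕ := {x | d * x ∈ S}

/-- The Frobenius number of S (for S ≠ ℕ): the maximum of the complement. -/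
noncomputable def frob (S : Set ℕ) : ℕ := sSup Sᶜ

/-- The multiplicity of S: the least positive element. -/
noncomputable def mult (S : Set ℕ) : ℕ := sInf (S \ {0})

/-- T is an arithmetic extension of S if T = {x : d₁x,...,dₙx ∈ S} for some
positive integers d₁,...,dₙ. -/
def IsArithmeticExtension (S T : Set ℕ) : Prop :=
  ∃ D : Finset ℕ, D.Nonempty ∧ (∀ d ∈ D, 0 < d) ∧ T = {x | ∀ d ∈ D, d * x ∈ S}

/-- An arithmetic variety: a nonempty family of numerical semigroups closed under
pairwise intersections and arithmetic extensions. -/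
def IsArithmeticVariety (𝒜 : Set (Set ℕ)) : Prop :=
  𝒜.Nonempty ∧ (∀ S ∈ 𝒜, IsNumericalSemigroup S) ∧
    (∀ S ∈ 𝒜, ∀ T ∈ 𝒜, S ∩ T ∈ 𝒜) ∧
    (∀ S ∈ 𝒜, ∀ T : Set ℕ, IsArithmeticExtension S T → T ∈ 𝒜)

lemma closure_two_odd (n : ℕ) :
    ((AddSubmonoid.closure {2, 2 * n + 1} : AddSubmonoid ℕ) : Set ℕ)
      = {x | x % 2 = 0 ∨ 2 * n + 1 ≤ x} := by
  apply le_antisymm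
  · have : AddSubmonoid.closure ({2, 2 * n + 1} : Set ℕ) ≤
        { carrier := {x | x % 2 = 0 ∨ 2 * n + 1 ≤ x},
          zero_mem' := Or.inl rfl,
          add_mem' := by
            rintro a b (ha | ha) (hb | hb) <;> simp only [Set.mem_setOf_eq] <;> omega } := by
      apply AddSubmonoid.closure_le.mpr
      rintro x (rfl | rfl)
      · exact Or.inl rfl
      · exact Or.inr le_rfl
    exact this
  · rintro x (hx | hx)
    · have h2 : (2 : ℕ) ∈ AddSubmonoid.closure ({2, 2 * n + 1} : Set ℕ) :=
        AddSubmonoid.subset_closure (by left; rfl)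
      have := AddSubmonoid.nsmul_mem (AddSubmonoid.closure _) h2 (x / 2)
      simpa [smul_eq_mul, show x / 2 * 2 = x by omega] using this
    · rcases Nat.mod_two_eq_zero_or_one x with he | ho
      · have h2 : (2 : ℕ) ∈ AddSubmonoid.closure ({2, 2 * n + 1} : Set ℕ) :=
          AddSubmonoid.subset_closure (by left; rfl)
        have := AddSubmonoid.nsmul_mem (AddSubmonoid.closure _) h2 (x / 2)
        simpa [smul_eq_mul, show x / 2 * 2 = x by omega] using this
      · have hm : (2 * n + 1 : ℕ) ∈ AddSubmonoid.closure ({2, 2 * n + 1} : Set ℕ) :=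
          AddSubmonoid.subset_closure (by right; rfl)
        have h2 : (2 : ℕ) ∈ AddSubmonoid.closure ({2, 2 * n + 1} : Set ℕ) :=
          AddSubmonoid.subset_closure (by left; rfl)
        have he : ((x - (2 * n + 1)) / 2) • (2 : ℕ) ∈
            AddSubmonoid.closure ({2, 2 * n + 1} : Set ℕ) :=
          AddSubmonoid.nsmul_mem _ h2 _
        have := AddSubmonoid.add_mem _ hm he
        rw [smul_eq_mul] at this
        rwa [show 2 * n + 1 + (x - (2 * n + 1)) / 2 * 2 = x by omega] at this

theorem d2_univ (T : Set ℕ) :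
    (IsNumericalSemigroup T ∧ NumQuot T 2 = Set.univ) ↔
      ∃ n : ℕ, T = ((AddSubmonoid.closure {2, 2 * n + 1} : AddSubmonoid ℕ) : Set ℕ) := by
  constructor
  · rintro ⟨⟨h0, hadd, hfin⟩, hQ⟩
    have heven : ∀ x : ℕ, 2 * x ∈ T := by
      intro x
      have : x ∈ NumQuot T 2 := by rw [hQ]; trivial
      exact this
    -- odds in T are nonempty
    have hbdd : BddAbove Tᶜ := hfin.bddAbove
    set N := sSup Tᶜ with hN
    have hodd : 2 * N + 1 ∈ T := by
      by_contra h
      have : 2 * N + 1 ≤ N := le_csSup hbdd h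
      omega
    have hS : {x | x ∈ T ∧ x % 2 = 1}.Nonempty := ⟨2 * N + 1, hodd, by omega⟩
    set m := sInf {x | x ∈ T ∧ x % 2 = 1} with hm
    obtain ⟨hmT, hm1⟩ := Nat.sInf_mem hS
    rw [← hm] at hmT hm1
    refine ⟨m / 2, ?_⟩
    have hmeq : 2 * (m / 2) + 1 = m := by omega
    rw [closure_two_odd (m / 2)]
    ext x
    simp only [Set.mem_setOf_eq, hmeq]
    constructor
    · intro hx
      rcases Nat.mod_two_eq_zero_or_one x with he | ho
      · exact Or.inl (by omega)
      · exact Or.inr (Nat.sInf_le ⟨hx, by omega⟩)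
    · rintro (he | hle)
      · have := heven (x / 2); rwa [show 2 * (x / 2) = x by omega] at this
      · have hx2 : x - m % 2 = 0 ∨ True := Or.inr trivial
        rcases Nat.mod_two_eq_zero_or_one x with he | ho
        · have := heven (x / 2); rwa [show 2 * (x / 2) = x by omega] at this
        · have h2 : 2 * ((x - m) / 2) ∈ T := heven _
          have := hadd m hmT _ h2
          rwa [show m + 2 * ((x - m) / 2) = x by omega] at this
  · rintro ⟨n, rfl⟩
    rw [closure_two_odd n]
    refine ⟨⟨Or.inl (by omega), ?_, ?_⟩, ?_⟩
    · rintro a (ha | ha) b (hb | hb) <;> simp only [Set.mem_setOf_eq] <;> omega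
    · apply Set.Finite.subset (Set.finite_Icc 0 (2 * n + 1))
      intro x hx
      simp only [Set.mem_compl_iff, Set.mem_setOf_eq, not_or, not_le] at hx
      exact Set.mem_Icc.mpr ⟨Nat.zero_le _, by omega⟩
    · ext x
      simp only [NumQuot, Set.mem_setOf_eq, Set.mem_univ, iff_true]
      exact Or.inl (by omega)
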